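/- arXiv:1504.05987 — 3 statements merged into one kernel-verified Lean document; each statement's English description precedes it below -/
import Mathlib

section
/- Let a and b be integers with 2 ≤ a ≤ b, let G = C_{2a} □ C_{2b}, and let c be a 2-coloring of the edges of G in which every 4-cycle of G is properly colored. Then every edge of G in one coordinate direction receives one color and every edge in the other coordinate direction receives the other color; consequently, any two vertices of G are connected by a walk that changes colors at most once. -/
open SimpleGraph

/-- The number of color changes along a list of edges: the number of consecutive
pairs receiving different colors. -/
def colorChanges {V : Type*} (c : Sym2 V → Bool) : List (Sym2 V) → ℕ
  | e₁ :: e₂ :: rest => (if c e₁ = c e₂ then 0 else 1) + colorChanges c (e₂ :: rest)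
  | _ => 0

/-- The cycle graph `C n` on `ZMod n`: `u` and `v` adjacent iff they are distinct and
differ by `±1`.  (For `n = 2` this is the complete graph on two vertices.) -/
def cycleG (n : ℕ) : SimpleGraph (ZMod n) where
  Adj u v := u ≠ v ∧ (u - v = 1 ∨ v - u = 1)
  symm := ⟨fun u v h => ⟨h.1.symm, h.2.symm⟩⟩
  loopless := ⟨fun u h => h.1 rfl⟩

/-- The discrete torus `C_{2a} □ C_{2b}`, the Cartesian (box) product of the cycles of
lengths `2a` and `2b`. -/
def torusG (a b : ℕ) : SimpleGraph (ZMod (2 * a) × ZMod (2 * b)) :=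
  SimpleGraph.boxProd (cycleG (2 * a)) (cycleG (2 * b))

/-- A closed walk is properly colored if any two cyclically consecutive edges receive
different colors. -/
def ProperlyColoredCycle {V : Type*} {G : SimpleGraph V} (c : Sym2 V → Bool) {v : V}
    (w : G.Walk v v) : Prop :=
  ∀ p ∈ w.edges.zip (w.edges.rotate 1), c p.1 ≠ c p.2

/- ### Auxiliary lemmas -/

lemma succ_ne' {n : ℕ} (h1 : (1 : ZMod n) ≠ 0) (x : ZMod n) : x ≠ x + 1 := by
  intro h; exact h1 (by linear_combination -h)

lemma adj_succ' {n : ℕ} (h1 : (1 : ZMod n) ≠ 0) (x : ZMod n) : (cycleG n).Adj x (x + 1) :=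
  ⟨succ_ne' h1 x, Or.inr (by ring)⟩

/-- A walk in the cycle graph from `x` to `x + k`. -/
def cwalk {n : ℕ} (h1 : (1 : ZMod n) ≠ 0) (x : ZMod n) : (k : ℕ) → (cycleG n).Walk x (x + k)
  | 0 => Walk.nil.copy rfl (by simp)
  | k+1 => ((cwalk h1 x k).concat (adj_succ' h1 (x + k))).copy rfl (by push_cast; ring)

/-- A walk in the cycle graph between any two vertices. -/
def cwalk' {n : ℕ} [NeZero n] (h1 : (1 : ZMod n) ≠ 0) (x x' : ZMod n) :
    (cycleG n).Walk x x' :=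
  (cwalk h1 x (x' - x).val).copy rfl (by rw [ZMod.natCast_val, ZMod.cast_id]; ring)

lemma zmod_const {n : ℕ} [NeZero n] (f : ZMod n → Bool) (h : ∀ z, f (z + 1) = f z) :
    ∀ z, f z = f 0 := by
  have key : ∀ k : ℕ, f (k : ZMod n) = f 0 := by
    intro k
    induction k with
    | zero => simp
    | succ k ih => rw [Nat.cast_succ, h, ih]
  intro z
  have := key z.val
  rwa [ZMod.natCast_val, ZMod.cast_id] at this

lemma cc_const {V : Type*} (c : Sym2 V → Bool) (t : Bool) :
    ∀ l : List (Sym2 V), (∀ e ∈ l, c e = t) → colorChanges c l = 0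
  | [], _ => rfl
  | [_], _ => rfl
  | e₁ :: e₂ :: rest, h => by
      rw [colorChanges, cc_const c t (e₂ :: rest) (fun e he => h e (by simp at he ⊢; tauto))]
      have h1 := h e₁ (by simp)
      have h2 := h e₂ (by simp)
      rw [h1, h2]; simp

lemma cc_append {V : Type*} (c : Sym2 V → Bool) (t s : Bool) (l₂ : List (Sym2 V))
    (h2 : ∀ e ∈ l₂, c e = s) :
    ∀ l₁ : List (Sym2 V), (∀ e ∈ l₁, c e = t) → colorChanges c (l₁ ++ l₂) ≤ 1
  | [], _ => by rw [List.nil_append, cc_const c s l₂ h2]; omega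
  | [e], h1 => by
      cases l₂ with
      | nil => simp [colorChanges]
      | cons f l₂' =>
        show colorChanges c (e :: f :: l₂') ≤ 1
        rw [colorChanges, cc_const c s (f :: l₂') h2]
        split <;> omega
  | e₁ :: e₂ :: l₁', h1 => by
      show colorChanges c (e₁ :: e₂ :: (l₁' ++ l₂)) ≤ 1
      rw [colorChanges]
      have : c e₁ = c e₂ := by rw [h1 e₁ (by simp), h1 e₂ (by simp)]
      rw [if_pos this]
      have := cc_append c t s l₂ h2 (e₂ :: l₁') (fun e he => h1 e (by simp at he ⊢; tauto))
      rw [List.cons_append] at this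
      omega

lemma square_colors {a b : ℕ} (ha1 : (1 : ZMod (2 * a)) ≠ 0) (hb1 : (1 : ZMod (2 * b)) ≠ 0)
    (c : Sym2 (ZMod (2 * a) × ZMod (2 * b)) → Bool)
    (hc : ∀ (v : ZMod (2 * a) × ZMod (2 * b)) (w : (torusG a b).Walk v v),
      w.IsCycle → w.length = 4 → ProperlyColoredCycle c w)
    (x : ZMod (2 * a)) (y : ZMod (2 * b)) :
    c s((x + 1, y), (x + 1, y + 1)) = !c s((x, y), (x + 1, y)) ∧
    c s((x, y + 1), (x + 1, y + 1)) = c s((x, y), (x + 1, y)) ∧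
    c s((x, y), (x, y + 1)) = !c s((x, y), (x + 1, y)) := by
  have hx := succ_ne' ha1 x
  have hy := succ_ne' hb1 y
  have a1 : (torusG a b).Adj (x, y) (x + 1, y) := Or.inl ⟨adj_succ' ha1 x, rfl⟩
  have a2 : (torusG a b).Adj (x + 1, y) (x + 1, y + 1) := Or.inr ⟨adj_succ' hb1 y, rfl⟩
  have a3 : (torusG a b).Adj (x + 1, y + 1) (x, y + 1) := Or.inl ⟨(adj_succ' ha1 x).symm, rfl⟩
  have a4 : (torusG a b).Adj (x, y + 1) (x, y) := Or.inr ⟨(adj_succ' hb1 y).symm, rfl⟩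
  set w : (torusG a b).Walk (x, y) (x, y) :=
    Walk.cons a1 (Walk.cons a2 (Walk.cons a3 (Walk.cons a4 Walk.nil))) with hw
  have hcyc : w.IsCycle := by
    constructor
    constructor
    · constructor
      simp [hw, Walk.edges, Sym2.eq, Sym2.rel_iff', Prod.ext_iff]
      refine ⟨?_, ?_, ?_⟩ <;> tauto
    · simp [hw]
    · simp [hw, Walk.support, Prod.ext_iff]
      tauto
  have hpc := hc _ w hcyc (by simp [hw])
  have he : w.edges = [s((x, y), (x + 1, y)), s((x + 1, y), (x + 1, y + 1)),
      s((x + 1, y + 1), (x, y + 1)), s((x, y + 1), (x, y))] := by simp [hw]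
  rw [ProperlyColoredCycle, he] at hpc
  have h12 : c s((x, y), (x + 1, y)) ≠ c s((x + 1, y), (x + 1, y + 1)) :=
    hpc (s((x, y), (x + 1, y)), s((x + 1, y), (x + 1, y + 1))) (by simp [List.rotate])
  have h23 : c s((x + 1, y), (x + 1, y + 1)) ≠ c s((x + 1, y + 1), (x, y + 1)) :=
    hpc (s((x + 1, y), (x + 1, y + 1)), s((x + 1, y + 1), (x, y + 1))) (by simp [List.rotate])
  have h34 : c s((x + 1, y + 1), (x, y + 1)) ≠ c s((x, y + 1), (x, y)) :=
    hpc (s((x + 1, y + 1), (x, y + 1)), s((x, y + 1), (x, y))) (by simp [List.rotate])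
  have e3 : s((x + 1, y + 1), (x, y + 1)) = s((x, y + 1), (x + 1, y + 1)) := Sym2.eq_swap
  have e4 : s((x, y + 1), (x, y)) = s((x, y), (x, y + 1)) := Sym2.eq_swap
  rw [e3] at h23 h34
  rw [e4] at h34
  refine ⟨?_, ?_, ?_⟩ <;>
    (revert h12 h23 h34;
     cases c s((x, y), (x + 1, y)) <;> cases c s((x + 1, y), (x + 1, y + 1)) <;>
       cases c s((x, y + 1), (x + 1, y + 1)) <;> cases c s((x, y), (x, y + 1)) <;> simp)

/-- If every 4-cycle of `C_{2a} □ C_{2b}` (with `2 ≤ a ≤ b`) is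
properly colored by `c`, then all edges in one coordinate direction get one color and
all edges in the other direction get the other color; consequently any two vertices
are joined by a walk that changes colors at most once. -/
theorem torus_all_squares_proper_structure
    {a b : ℕ} (ha : 2 ≤ a) (hab : a ≤ b)
    (c : Sym2 (ZMod (2 * a) × ZMod (2 * b)) → Bool)
    (hc : ∀ (v : ZMod (2 * a) × ZMod (2 * b)) (w : (torusG a b).Walk v v),
      w.IsCycle → w.length = 4 → ProperlyColoredCycle c w) :
    (∃ t : Bool,
      (∀ (x x' : ZMod (2 * a)) (y : ZMod (2 * b)),
        (cycleG (2 * a)).Adj x x' → c s((x, y), (x', y)) = t) ∧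
      (∀ (x : ZMod (2 * a)) (y y' : ZMod (2 * b)),
        (cycleG (2 * b)).Adj y y' → c s((x, y), (x, y')) = !t)) ∧
    ∀ u v : ZMod (2 * a) × ZMod (2 * b),
      ∃ w : (torusG a b).Walk u v, colorChanges c w.edges ≤ 1 := by
  have hb : 2 ≤ b := le_trans ha hab
  haveI : Fact (1 < 2 * a) := ⟨by omega⟩
  haveI : Fact (1 < 2 * b) := ⟨by omega⟩
  haveI : NeZero (2 * a) := ⟨by omega⟩
  haveI : NeZero (2 * b) := ⟨by omega⟩
  have ha1 : (1 : ZMod (2 * a)) ≠ 0 := one_ne_zero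
  have hb1 : (1 : ZMod (2 * b)) ≠ 0 := one_ne_zero
  -- the horizontal color is constant
  set t : Bool := c s(((0 : ZMod (2 * a)), (0 : ZMod (2 * b))), (1, 0)) with ht
  have Hconst : ∀ (x : ZMod (2 * a)) (y : ZMod (2 * b)), c s((x, y), (x + 1, y)) = t := by
    have hx : ∀ (y : ZMod (2 * b)) (x : ZMod (2 * a)),
        c s((x, y), (x + 1, y)) = c s(((0 : ZMod (2 * a)), y), (1, y)) := by
      intro y
      have step : ∀ x : ZMod (2 * a),
          c s((x + 1, y), (x + 1 + 1, y)) = c s((x, y), (x + 1, y)) := by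
        intro x
        have s1 := (square_colors ha1 hb1 c hc x y).1
        have s2 := (square_colors ha1 hb1 c hc (x + 1) y).2.2
        -- s2 : c s((x+1,y),(x+1,y+1)) = ! c s((x+1,y),(x+1+1,y))
        rw [s1] at s2
        cases h : c s((x, y), (x + 1, y)) <;> rw [h] at s2 <;> simpa using s2.symm
      have := zmod_const (fun x => c s((x, y), (x + 1, y))) step
      simpa using fun x => this x
    have hy : ∀ y : ZMod (2 * b),
        c s(((0 : ZMod (2 * a)), y), (1, y)) = t := by
      have step : ∀ y : ZMod (2 * b),
          c s(((0 : ZMod (2 * a)), y + 1), (1, y + 1)) = c s(((0 : ZMod (2 * a)), y), (1, y)) := by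
        intro y
        have := (square_colors ha1 hb1 c hc 0 y).2.1
        simpa using this
      have := zmod_const (fun y => c s(((0 : ZMod (2 * a)), y), (1, y))) step
      simpa [ht] using fun y => this y
    intro x y
    rw [hx y x, hy y]
  have Vconst : ∀ (x : ZMod (2 * a)) (y : ZMod (2 * b)), c s((x, y), (x, y + 1)) = !t := by
    intro x y
    have := (square_colors ha1 hb1 c hc x y).2.2
    rw [Hconst x y] at this
    exact this
  have Hall : ∀ (x x' : ZMod (2 * a)) (y : ZMod (2 * b)),
      (cycleG (2 * a)).Adj x x' → c s((x, y), (x', y)) = t := by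
    rintro x x' y ⟨hne, h | h⟩
    · have hx : x = x' + 1 := by linear_combination h
      rw [hx, Sym2.eq_swap]
      exact Hconst x' y
    · have hx : x' = x + 1 := by linear_combination h
      rw [hx]; exact Hconst x y
  have Vall : ∀ (x : ZMod (2 * a)) (y y' : ZMod (2 * b)),
      (cycleG (2 * b)).Adj y y' → c s((x, y), (x, y')) = !t := by
    rintro x y y' ⟨hne, h | h⟩
    · have hy : y = y' + 1 := by linear_combination h
      rw [hy, Sym2.eq_swap]
      exact Vconst x y'
    · have hy : y' = y + 1 := by linear_combination h
      rw [hy]; exact Vconst x y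
  refine ⟨⟨t, Hall, Vall⟩, ?_⟩
  intro u v
  let w₁ : (cycleG (2 * a)).Walk u.1 v.1 := cwalk' ha1 u.1 v.1
  let w₂ : (cycleG (2 * b)).Walk u.2 v.2 := cwalk' hb1 u.2 v.2
  let W : (torusG a b).Walk (u.1, u.2) (v.1, v.2) :=
    (w₁.boxProdLeft (cycleG (2 * b)) u.2).append (w₂.boxProdRight (cycleG (2 * a)) v.1)
  refine ⟨W.copy (by simp) (by simp), ?_⟩
  rw [Walk.edges_copy]
  have hW : W.edges = (w₁.boxProdLeft (cycleG (2 * b)) u.2).edges ++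
      (w₂.boxProdRight (cycleG (2 * a)) v.1).edges := Walk.edges_append _ _
  rw [hW]
  apply cc_append c t (!t)
  · -- second part: all vertical, color !t
    intro e he
    replace he : e ∈ (w₂.map (SimpleGraph.boxProdRight (cycleG (2 * a)) (cycleG (2 * b)) v.1).toHom).edges := he
    rw [Walk.edges_map] at he
    obtain ⟨e', he', rfl⟩ := List.mem_map.mp he
    have hE : e' ∈ (cycleG (2 * b)).edgeSet := Walk.edges_subset_edgeSet _ he'
    revert hE
    induction e' using Sym2.ind with
    | _ y y' =>
      intro hE
      exact Vall v.1 y y' hE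
  · -- first part: all horizontal, color t
    intro e he
    replace he : e ∈ (w₁.map (SimpleGraph.boxProdLeft (cycleG (2 * a)) (cycleG (2 * b)) u.2).toHom).edges := he
    rw [Walk.edges_map] at he
    obtain ⟨e', he', rfl⟩ := List.mem_map.mp he
    have hE : e' ∈ (cycleG (2 * a)).edgeSet := Walk.edges_subset_edgeSet _ he'
    revert hE
    induction e' using Sym2.ind with
    | _ x x' =>
      intro hE
      exact Hall x x' u.2 hE
end

section
/- Let m ≥ 2 and let c be the proper (alternating) 2-coloring of the edges of the cycle C_{2m}, in which any two adjacent edges receive different colors. Then for every vertex u of C_{2m}, every walk from u to the antipodal vertex of u (the vertex at distance m from u) changes colors at least m−1 times. -/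
open SimpleGraph

/-- Potential: a lower bound for the number of color changes of a walk whose
remaining oriented distance to its target (measured in the direction of its
first step) is `t`. -/
def psi (n t : ℕ) : ℕ := if t = 0 then 0 else min (t - 1) (n - t)

lemma val_sub_one' {n : ℕ} [NeZero n] (x : ZMod n) (hx : 1 ≤ x.val) :
    (x - 1).val = x.val - 1 := by
  have hxn : x.val < n := ZMod.val_lt x
  have hcast : (x - 1) = ((x.val - 1 : ℕ) : ZMod n) := by
    have hx' : ((x.val : ℕ) : ZMod n) = x := ZMod.natCast_rightInverse x
    push_cast [hx]
    rw [hx']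
  rw [hcast, ZMod.val_natCast, Nat.mod_eq_of_lt (by omega)]

lemma val_one_sub {n : ℕ} [NeZero n] (x : ZMod n) (h2 : 2 ≤ x.val) :
    (1 - x).val = n + 1 - x.val := by
  have hxn : x.val < n := ZMod.val_lt x
  have hcast : (1 - x) = ((n + 1 - x.val : ℕ) : ZMod n) := by
    have hx' : ((x.val : ℕ) : ZMod n) = x := ZMod.natCast_rightInverse x
    have hn : ((n : ℕ) : ZMod n) = 0 := ZMod.natCast_self n
    push_cast [show x.val ≤ n + 1 by omega]
    rw [hx', hn]
    ring
  rw [hcast, ZMod.val_natCast, Nat.mod_eq_of_lt (by omega)]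

lemma psiA {n : ℕ} [NeZero n] (x : ZMod n) :
    psi n x.val ≤ psi n ((1 - x).val) := by
  have hlt := ZMod.val_lt x
  rcases Nat.lt_or_ge x.val 2 with h | h
  · unfold psi; split_ifs <;> omega
  · rw [val_one_sub x h]; unfold psi; split_ifs <;> omega

lemma psiB {n : ℕ} [NeZero n] (x : ZMod n) :
    psi n x.val ≤ 1 + psi n ((x - 1).val) := by
  have hlt := ZMod.val_lt x
  rcases Nat.lt_or_ge x.val 1 with h | h
  · unfold psi; split_ifs <;> omega
  · rw [val_sub_one' x h]; unfold psi; split_ifs <;> omega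

lemma key {m : ℕ} (hm : 2 ≤ m) (c : Sym2 (ZMod (2*m)) → Bool)
    (hc : ∀ u : ZMod (2*m), c s(u - 1, u) ≠ c s(u, u + 1)) :
    ∀ {a' b : ZMod (2*m)} (w : (cycleG (2*m)).Walk a' b) (a : ZMod (2*m)),
      (cycleG (2*m)).Adj a a' →
      psi (2*m) (((b - a) * (a' - a)).val) ≤ colorChanges c (s(a, a') :: w.edges) := by
  have : NeZero (2*m) := ⟨by omega⟩
  have hval1 : (1 : ZMod (2*m)).val = 1 := by
    rw [← Nat.cast_one, ZMod.val_natCast, Nat.mod_eq_of_lt (by omega)]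
  intro a' b w
  induction w with
  | nil =>
    rename_i v
    intro a ha
    have hs : (v - a) * (v - a) = 1 := by
      rcases ha.2 with h | h
      · have h' : v - a = -1 := by linear_combination -h
        rw [h']; norm_num
      · rw [h]; norm_num
    simp only [Walk.edges_nil]
    rw [hs, hval1]
    simp [psi, colorChanges]
  | cons h w ih =>
    rename_i a' a₂ b
    intro a ha
    have hss : (a' - a) * (a' - a) = 1 := by
      rcases ha.2 with h' | h'
      · have h'' : a' - a = -1 := by linear_combination -h'
        rw [h'']; norm_num
      · rw [h']; norm_num
    have hedges : (Walk.cons h w).edges = s(a', a₂) :: w.edges := rfl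
    rw [hedges]
    have hcc : colorChanges c (s(a, a') :: s(a', a₂) :: w.edges)
        = (if c s(a, a') = c s(a', a₂) then 0 else 1)
          + colorChanges c (s(a', a₂) :: w.edges) := rfl
    rw [hcc]
    have ih' := ih a' h
    by_cases hback : a₂ = a
    · -- backtracking step: same edge, hence same color
      subst hback
      have heq : (s(a₂, a') : Sym2 (ZMod (2*m))) = s(a', a₂) := Sym2.eq_swap
      rw [heq, if_pos rfl]
      have hx2 : (b - a') * (a₂ - a') = 1 - (b - a₂) * (a' - a₂) := by
        linear_combination hss
      rw [hx2] at ih'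
      calc psi (2*m) (((b - a₂) * (a' - a₂)).val)
          ≤ psi (2*m) ((1 - (b - a₂) * (a' - a₂)).val) := psiA _
        _ ≤ 0 + colorChanges c (s(a', a₂) :: w.edges) := by omega
    · -- forward step: adjacent distinct edges, different colors
      have hdir : a₂ - a' = a' - a := by
        rcases ha.2 with h1 | h1 <;> rcases h.2 with h2 | h2
        · linear_combination h1 - h2
        · exact absurd (by linear_combination h2 - h1 : a₂ = a) hback
        · exact absurd (by linear_combination h1 - h2 : a₂ = a) hback
        · linear_combination h2 - h1
      have hcol : c s(a, a') ≠ c s(a', a₂) := by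
        rcases ha.2 with h1 | h1
        · -- a - a' = 1 : a = a' + 1, a₂ = a' - 1
          have e1 : a = a' + 1 := by linear_combination h1
          have e2 : a₂ = a' - 1 := by linear_combination hdir - h1
          rw [e1, e2]
          have := (hc a').symm
          rwa [show (s(a' + 1, a') : Sym2 (ZMod (2*m))) = s(a', a' + 1) from Sym2.eq_swap,
            show (s(a', a' - 1) : Sym2 (ZMod (2*m))) = s(a' - 1, a') from Sym2.eq_swap]
        · -- a' - a = 1 : a = a' - 1, a₂ = a' + 1
          have e1 : a = a' - 1 := by linear_combination -h1
          have e2 : a₂ = a' + 1 := by linear_combination hdir + h1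
          rw [e1, e2]
          exact hc a'
      rw [if_neg hcol]
      have hx2 : (b - a') * (a₂ - a') = (b - a) * (a' - a) - 1 := by
        linear_combination (b - a') * hdir - hss
      rw [hx2] at ih'
      calc psi (2*m) (((b - a) * (a' - a)).val)
          ≤ 1 + psi (2*m) (((b - a) * (a' - a) - 1).val) := psiB _
        _ ≤ 1 + colorChanges c (s(a', a₂) :: w.edges) := by omega

/-- If `c` is the proper (alternating) 2-coloring of the cycle
`C_{2m}` (`m ≥ 2`), i.e. any two adjacent edges receive different colors, then every
walk from a vertex `u` to its antipodal vertex `u + m` changes colors at least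
`m - 1` times. -/
theorem proper_cycle_coloring_many_switches
    {m : ℕ} (hm : 2 ≤ m) (c : Sym2 (ZMod (2 * m)) → Bool)
    (hc : ∀ u : ZMod (2 * m), c s(u - 1, u) ≠ c s(u, u + 1))
    (u : ZMod (2 * m)) (w : (cycleG (2 * m)).Walk u (u + (m : ZMod (2 * m)))) :
    m - 1 ≤ colorChanges c w.edges := by
  have : NeZero (2*m) := ⟨by omega⟩
  have hmval : ((m : ZMod (2*m))).val = m := by
    rw [ZMod.val_natCast, Nat.mod_eq_of_lt (by omega)]
  have hmne : (m : ZMod (2*m)) ≠ 0 := by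
    intro h
    rw [h, ZMod.val_zero] at hmval
    omega
  suffices H : ∀ (b : ZMod (2*m)), b = u + (m : ZMod (2*m)) →
      ∀ (w' : (cycleG (2*m)).Walk u b), m - 1 ≤ colorChanges c w'.edges from
    H _ rfl w
  intro b hb w
  cases w with
  | nil =>
    exact absurd (by linear_combination -hb : (m : ZMod (2*m)) = 0) hmne
  | cons h w =>
    rename_i a'
    subst hb
    have hb : psi (2*m) (((u + (m : ZMod (2*m)) - u) * (a' - u)).val)
        ≤ colorChanges c (s(u, a') :: w.edges) := key hm c hc w u h
    have hx : (u + (m : ZMod (2*m)) - u) * (a' - u) = (m : ZMod (2*m))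
        ∨ (u + (m : ZMod (2*m)) - u) * (a' - u) = -(m : ZMod (2*m)) := by
      rcases h.2 with h1 | h1
      · right; linear_combination -(m : ZMod (2*m)) * h1
      · left; linear_combination (m : ZMod (2*m)) * h1
    have hneg : -(m : ZMod (2*m)) = (m : ZMod (2*m)) := by
      have h0 : ((2*m : ℕ) : ZMod (2*m)) = 0 := ZMod.natCast_self _
      push_cast at h0
      linear_combination -h0
    have hval : ((u + (m : ZMod (2*m)) - u) * (a' - u)).val = m := by
      rcases hx with h1 | h1 <;> rw [h1]
      · exact hmval
      · rw [hneg]; exact hmval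
    rw [hval] at hb
    have : psi (2*m) m = m - 1 := by unfold psi; split_ifs <;> omega
    rw [this] at hb
    have : (Walk.cons h w).edges = s(u, a') :: w.edges := rfl
    rw [this]
    exact hb
end

section
/- Let a and b be integers with 2 ≤ a ≤ b, let G = C_{2a} □ C_{2b}, let c be a 2-coloring of the edges of G, and fix a start vertex (x,y). For every j with 1 ≤ j ≤ a there exists a j-ascending diagonal P starting at (x,y) such that for every i ≤ j, the initial segment of P that is an i-ascending diagonal starting at (x,y) has the minimum number of color changes among all i-ascending diagonals starting at (x,y). -/
open SimpleGraph

/-- A `j`-ascending diagonal starting at `(x, y)`: a walk of length `2j` from `(x, y)`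
to `(x + j, y + j)` visiting the diagonal points `(x + i, y + i)` in order. -/
def IsAscDiag (a b j : ℕ) (x : ZMod (2 * a)) (y : ZMod (2 * b))
    (w : (torusG a b).Walk (x, y) (x + (j : ZMod (2 * a)), y + (j : ZMod (2 * b)))) :
    Prop :=
  w.length = 2 * j ∧
    ∀ i : ℕ, i ≤ j → w.getVert (2 * i) = (x + (i : ZMod (2 * a)), y + (i : ZMod (2 * b)))

namespace LazyDiag

lemma one_ne_zero_zmod {n : ℕ} (hn : 2 ≤ n) : (1 : ZMod n) ≠ 0 := by
  have : ((1 : ℕ) : ZMod n) ≠ 0 := by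
    rw [Ne, ZMod.natCast_eq_zero_iff, Nat.dvd_one]
    omega
  simpa using this

lemma self_ne_add_one {n : ℕ} (hn : 2 ≤ n) (u : ZMod n) : u ≠ u + 1 := by
  intro h
  exact one_ne_zero_zmod hn (by have := congrArg (fun z => z - u) h; simpa using this.symm)

lemma cyc_adj_succ {n : ℕ} (hn : 2 ≤ n) (u : ZMod n) : (cycleG n).Adj u (u + 1) :=
  ⟨self_ne_add_one hn u, Or.inr (by ring)⟩

section
variable {a b : ℕ}

/-- diagonal point -/
def pt (x : ZMod (2 * a)) (y : ZMod (2 * b)) (k : ℕ) : ZMod (2 * a) × ZMod (2 * b) :=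
  (x + (k : ZMod (2 * a)), y + (k : ZMod (2 * b)))

/-- intermediate point between `pt k` and `pt (k+1)` -/
def mid (x : ZMod (2 * a)) (y : ZMod (2 * b)) (k : ℕ) (t : Bool) :
    ZMod (2 * a) × ZMod (2 * b) :=
  if t then (x + (k : ZMod (2 * a)) + 1, y + (k : ZMod (2 * b)))
       else (x + (k : ZMod (2 * a)), y + (k : ZMod (2 * b)) + 1)

lemma pt_succ (x : ZMod (2 * a)) (y : ZMod (2 * b)) (k : ℕ) :
    pt x y (k + 1) = (x + (k : ZMod (2 * a)) + 1, y + (k : ZMod (2 * b)) + 1) := by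
  simp [pt, Nat.cast_add, Nat.cast_one, add_assoc]

lemma adj1 (ha : 2 ≤ a) (hb : 2 ≤ b) (x : ZMod (2 * a)) (y : ZMod (2 * b)) (k : ℕ)
    (t : Bool) : (torusG a b).Adj (pt x y k) (mid x y k t) := by
  rw [torusG, SimpleGraph.boxProd_adj]
  cases t
  · exact Or.inr ⟨cyc_adj_succ (by omega) _, rfl⟩
  · exact Or.inl ⟨cyc_adj_succ (by omega) _, rfl⟩

lemma adj2 (ha : 2 ≤ a) (hb : 2 ≤ b) (x : ZMod (2 * a)) (y : ZMod (2 * b)) (k : ℕ)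
    (t : Bool) : (torusG a b).Adj (mid x y k t) (pt x y (k + 1)) := by
  rw [pt_succ, torusG, SimpleGraph.boxProd_adj]
  cases t
  · exact Or.inl ⟨cyc_adj_succ (by omega) _, rfl⟩
  · exact Or.inr ⟨cyc_adj_succ (by omega) _, rfl⟩

lemma mid_classify (ha : 2 ≤ a) (hb : 2 ≤ b) (x : ZMod (2 * a)) (y : ZMod (2 * b)) (k : ℕ)
    {z : ZMod (2 * a) × ZMod (2 * b)}
    (h1 : (torusG a b).Adj (pt x y k) z) (h2 : (torusG a b).Adj z (pt x y (k + 1))) :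
    z = mid x y k true ∨ z = mid x y k false := by
  obtain ⟨z1, z2⟩ := z
  rw [pt_succ] at h2
  rw [torusG, SimpleGraph.boxProd_adj] at h1 h2
  dsimp only [pt] at h1 h2
  rcases h1 with ⟨h1, hy⟩ | ⟨h1, hx⟩
  · rcases h2 with ⟨h2, hy2⟩ | ⟨h2, hx2⟩
    · exact absurd (hy.trans hy2)
        (by simpa [add_assoc] using self_ne_add_one (show 2 ≤ 2 * b by omega) (y + (k : ZMod (2*b))))
    · left; rw [mid, if_pos rfl]; exact Prod.ext hx2 hy.symm
  · rcases h2 with ⟨h2, hy2⟩ | ⟨h2, hx2⟩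
    · right; rw [mid, if_neg (by simp)]; exact Prod.ext hx.symm hy2
    · exact absurd (hx.trans hx2)
        (by simpa [add_assoc] using self_ne_add_one (show 2 ≤ 2 * a by omega) (x + (k : ZMod (2*a))))

end
end LazyDiag


namespace LazyDP

variable (inner : ℕ → Bool → ℕ) (junc : ℕ → Bool → Bool → ℕ)

/-- cost of a choice sequence, first `i` steps -/
def C (σ : ℕ → Bool) : ℕ → ℕ
  | 0 => 0
  | 1 => inner 0 (σ 0)
  | (k + 2) => C σ (k + 1) + junc k (σ k) (σ (k + 1)) + inner (k + 1) (σ (k + 1))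

/-- DP value: min cost over `i`-step sequences whose last choice is `t` -/
def f : ℕ → Bool → ℕ
  | 0, _ => 0
  | 1, t => inner 0 t
  | (k + 2), t =>
      min (f (k + 1) true + junc k true t) (f (k + 1) false + junc k false t) + inner (k + 1) t

/-- global minimum at level `i` -/
def m (i : ℕ) : ℕ := min (f inner junc i true) (f inner junc i false)

lemma m_le_f (i : ℕ) (t : Bool) : m inner junc i ≤ f inner junc i t := by
  cases t
  · exact min_le_right _ _
  · exact min_le_left _ _

lemma f_le_C (σ : ℕ → Bool) : ∀ k, f inner junc (k + 1) (σ k) ≤ C inner junc σ (k + 1) := by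
  intro k
  induction k with
  | zero => exact le_of_eq rfl
  | succ k ih =>
      have hf : f inner junc (k + 2) (σ (k + 1)) =
          min (f inner junc (k+1) true + junc k true (σ (k+1)))
            (f inner junc (k+1) false + junc k false (σ (k+1))) + inner (k+1) (σ (k+1)) := rfl
      have hc : C inner junc σ (k + 2) =
          C inner junc σ (k + 1) + junc k (σ k) (σ (k + 1)) + inner (k+1) (σ (k+1)) := rfl
      rw [show k + 1 + 1 = k + 2 from rfl, hf, hc]
      have h1 : min (f inner junc (k+1) true + junc k true (σ (k+1)))
          (f inner junc (k+1) false + junc k false (σ (k+1)))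
          ≤ f inner junc (k+1) (σ k) + junc k (σ k) (σ (k+1)) := by
        cases hσ : σ k
        · exact min_le_right _ _
        · exact min_le_left _ _
      omega

lemma m_le_C (σ : ℕ → Bool) (k : ℕ) : m inner junc (k + 1) ≤ C inner junc σ (k + 1) :=
  le_trans (m_le_f inner junc (k + 1) (σ k)) (f_le_C inner junc σ k)

lemma C_congr (σ σ' : ℕ → Bool) :
    ∀ i, (∀ k < i, σ k = σ' k) → C inner junc σ i = C inner junc σ' i := by
  intro i
  induction i with
  | zero => intro _; rfl
  | succ i ih =>
      intro h
      match i, ih with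
      | 0, _ => show inner 0 (σ 0) = inner 0 (σ' 0); rw [h 0 (by omega)]
      | (k + 1), ih =>
          show C inner junc σ (k + 1) + _ + _ = C inner junc σ' (k + 1) + _ + _
          rw [ih (fun k' hk' => h k' (by omega)), h k (by omega), h (k+1) (by omega)]

variable (hjunc : ∀ k s t, junc k s t ≤ 1)

include hjunc in
/-- existence of lazy sequences -/
lemma lazy : ∀ k (t : Bool), f inner junc (k + 1) t = m inner junc (k + 1) →
    ∃ σ : ℕ → Bool, σ k = t ∧ ∀ i, 1 ≤ i → i ≤ k + 1 → C inner junc σ i = m inner junc i := by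
  intro k
  induction k with
  | zero =>
      intro t ht
      refine ⟨fun _ => t, rfl, ?_⟩
      intro i h1 h2
      have : i = 1 := by omega
      subst this
      exact ht
  | succ k ih =>
      intro t ht
      have hdef : f inner junc (k + 2) t =
          min (f inner junc (k + 1) true + junc k true t)
            (f inner junc (k + 1) false + junc k false t) + inner (k + 1) t := rfl
      have hex : ∃ smin : Bool,
          min (f inner junc (k + 1) true + junc k true t)
            (f inner junc (k + 1) false + junc k false t)
          = f inner junc (k + 1) smin + junc k smin t := by
        rcases min_choice (f inner junc (k + 1) true + junc k true t)
          (f inner junc (k + 1) false + junc k false t) with h | h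
        · exact ⟨true, h⟩
        · exact ⟨false, h⟩
      obtain ⟨smin, hmineq⟩ := hex
      have hex2 : ∃ s' : Bool, f inner junc (k + 1) s' = m inner junc (k + 1) ∧
          (f inner junc (k + 1) smin = m inner junc (k + 1) → s' = smin) := by
        by_cases hsm : f inner junc (k + 1) smin = m inner junc (k + 1)
        · exact ⟨smin, hsm, fun _ => rfl⟩
        · have hm : ∃ s' : Bool, f inner junc (k + 1) s' = m inner junc (k + 1) := by
            rcases min_choice (f inner junc (k + 1) true) (f inner junc (k + 1) false) with h | h
            · exact ⟨true, h.symm⟩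
            · exact ⟨false, h.symm⟩
          obtain ⟨s', hs'⟩ := hm
          exact ⟨s', hs', fun h => absurd h hsm⟩
      obtain ⟨s', hs', hs'choice⟩ := hex2
      obtain ⟨σ, hσlast, hσ⟩ := ih s' hs'
      set σ' : ℕ → Bool := fun i => if i = k + 1 then t else σ i with hσ'def
      have hlt : ∀ i ≤ k + 1, C inner junc σ' i = C inner junc σ i := by
        intro i hi
        exact (C_congr inner junc σ σ' i (fun k' hk' => by
          simp only [hσ'def]; rw [if_neg (by omega)])).symm
      refine ⟨σ', by simp [hσ'def], ?_⟩
      intro i h1 h2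
      rcases Nat.lt_or_ge i (k + 2) with hi | hi
      · rw [hlt i (by omega)]; exact hσ i h1 (by omega)
      · have : i = k + 2 := by omega
        subst this
        have hC : C inner junc σ' (k + 2) =
            m inner junc (k + 1) + junc k s' t + inner (k + 1) t := by
          show C inner junc σ' (k + 1) + junc k (σ' k) (σ' (k + 1)) + inner (k + 1) (σ' (k + 1)) =
            _
          rw [hlt (k + 1) (by omega), hσ (k + 1) (by omega) (by omega)]
          have e1 : σ' k = s' := by simp only [hσ'def]; rw [if_neg (by omega)]; exact hσlast
          have e2 : σ' (k + 1) = t := by simp [hσ'def]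
          rw [e1, e2]
        have hub : C inner junc σ' (k + 2) ≤ m inner junc (k + 2) := by
          rw [hC, ← ht, hdef, hmineq]
          by_cases hsm : f inner junc (k + 1) smin = m inner junc (k + 1)
          · rw [hs'choice hsm, ← hsm]
          · have hgt : m inner junc (k + 1) + 1 ≤ f inner junc (k + 1) smin :=
              lt_of_le_of_ne (m_le_f inner junc (k + 1) smin) (fun h' => hsm h'.symm)
            have g3 := hjunc k s' t
            omega
        have hlb : m inner junc (k + 2) ≤ C inner junc σ' (k + 2) :=
          m_le_C inner junc σ' (k + 1)
        omega

end LazyDP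

namespace LazyDiag

variable {a b : ℕ}

/-- first edge of step `k` -/
def E1 (x : ZMod (2 * a)) (y : ZMod (2 * b)) (k : ℕ) (t : Bool) :
    Sym2 (ZMod (2 * a) × ZMod (2 * b)) := s(pt x y k, mid x y k t)

/-- second edge of step `k` -/
def E2 (x : ZMod (2 * a)) (y : ZMod (2 * b)) (k : ℕ) (t : Bool) :
    Sym2 (ZMod (2 * a) × ZMod (2 * b)) := s(mid x y k t, pt x y (k + 1))

/-- list of edges of the diagonal walk given by choices `σ`, steps `s, …, s+i-1` -/
def L (x : ZMod (2 * a)) (y : ZMod (2 * b)) (σ : ℕ → Bool) :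
    ℕ → ℕ → List (Sym2 (ZMod (2 * a) × ZMod (2 * b)))
  | _, 0 => []
  | s, (i + 1) => E1 x y s (σ s) :: E2 x y s (σ s) :: L x y σ (s + 1) i

variable (x : ZMod (2 * a)) (y : ZMod (2 * b)) (σ : ℕ → Bool)

lemma L_length : ∀ i s, (L x y σ s i).length = 2 * i := by
  intro i
  induction i with
  | zero => intro s; rfl
  | succ i ih =>
      intro s
      show (E1 x y s (σ s) :: E2 x y s (σ s) :: L x y σ (s+1) i).length = 2 * (i+1)
      simp only [List.length_cons, ih]
      ring

lemma L_split : ∀ i s k, L x y σ s (i + k) = L x y σ s i ++ L x y σ (s + i) k := by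
  intro i
  induction i with
  | zero => intro s k; simp [L]
  | succ i ih =>
      intro s k
      rw [show i + 1 + k = (i + k) + 1 from by omega]
      show E1 x y s (σ s) :: E2 x y s (σ s) :: L x y σ (s+1) (i + k) = _
      rw [ih (s+1) k, show s + 1 + i = s + (i + 1) from by omega]
      rfl

lemma L_snoc (i s : ℕ) : L x y σ s (i + 1) =
    L x y σ s i ++ [E1 x y (s + i) (σ (s + i)), E2 x y (s + i) (σ (s + i))] :=
  L_split x y σ i s 1

lemma L_take {i j : ℕ} (h : i ≤ j) : (L x y σ 0 j).take (2 * i) = L x y σ 0 i := by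
  rw [show j = i + (j - i) from by omega, L_split x y σ i 0 (j - i),
    ← L_length x y σ i 0]
  exact List.take_left

lemma L_getLast (i s : ℕ) :
    (L x y σ s (i + 1)).getLast? = some (E2 x y (s + i) (σ (s + i))) := by
  rw [L_snoc, show L x y σ s i ++ [E1 x y (s + i) (σ (s + i)), E2 x y (s + i) (σ (s + i))] =
    (L x y σ s i ++ [E1 x y (s + i) (σ (s + i))]) ++ [E2 x y (s + i) (σ (s + i))] from by
      simp]
  exact List.getLast?_concat

end LazyDiag

namespace LazyDiag
/-- `colorChanges` of an append -/
lemma cc_append {V : Type*} (c : Sym2 V → Bool) :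
    ∀ (l : List (Sym2 V)) (e : Sym2 V) (l₂ : List (Sym2 V)),
      colorChanges c (l ++ e :: l₂) =
        colorChanges c l + (l.getLast?.elim 0 (fun e' => if c e' = c e then 0 else 1)) +
          colorChanges c (e :: l₂) := by
  intro l
  induction l with
  | nil => intro e l₂; simp [colorChanges]
  | cons a l ih =>
      intro e l₂
      cases l with
      | nil =>
          show colorChanges c (a :: e :: l₂) = _
          rw [show colorChanges c (a :: e :: l₂) =
            (if c a = c e then 0 else 1) + colorChanges c (e :: l₂) from rfl]
          simp [colorChanges]
      | cons b l' =>
          show colorChanges c (a :: b :: (l' ++ e :: l₂)) = _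
          rw [show colorChanges c (a :: b :: (l' ++ e :: l₂)) =
            (if c a = c b then 0 else 1) + colorChanges c (b :: (l' ++ e :: l₂)) from rfl]
          rw [show (b :: (l' ++ e :: l₂)) = (b :: l') ++ e :: l₂ from rfl, ih e l₂]
          rw [show colorChanges c (a :: b :: l') =
            (if c a = c b then 0 else 1) + colorChanges c (b :: l') from rfl]
          rw [List.getLast?_cons_cons]
          omega

variable {a b : ℕ} (c : Sym2 (ZMod (2 * a) × ZMod (2 * b)) → Bool)
  (x : ZMod (2 * a)) (y : ZMod (2 * b))

/-- the "inner" cost of step `k` with choice `t` -/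
def innerF (k : ℕ) (t : Bool) : ℕ := if c (E1 x y k t) = c (E2 x y k t) then 0 else 1

/-- the "junction" cost between step `k` (choice `s`) and step `k+1` (choice `t`) -/
def juncF (k : ℕ) (s t : Bool) : ℕ := if c (E2 x y k s) = c (E1 x y (k + 1) t) then 0 else 1

lemma juncF_le_one (k : ℕ) (s t : Bool) : juncF c x y k s t ≤ 1 := by
  rw [juncF]; split <;> omega

lemma cc_pair (e₁ e₂ : Sym2 (ZMod (2 * a) × ZMod (2 * b))) :
    colorChanges c [e₁, e₂] = if c e₁ = c e₂ then 0 else 1 := by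
  show (if c e₁ = c e₂ then 0 else 1) + colorChanges c [e₂] = _
  rw [show colorChanges c [e₂] = 0 from rfl, Nat.add_zero]

/-- bridge : `colorChanges` of the edge list equals the abstract cost -/
lemma cc_L (σ : ℕ → Bool) :
    ∀ i, colorChanges c (L x y σ 0 i) = LazyDP.C (innerF c x y) (juncF c x y) σ i := by
  intro i
  induction i with
  | zero => rfl
  | succ i ih =>
      match i, ih with
      | 0, _ =>
          show colorChanges c (L x y σ 0 1) = innerF c x y 0 (σ 0)
          rw [show L x y σ 0 1 = [E1 x y 0 (σ 0), E2 x y 0 (σ 0)] from rfl, cc_pair]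
          rfl
      | (k + 1), ih =>
          rw [L_snoc x y σ (k + 1) 0]
          rw [show [E1 x y (0 + (k+1)) (σ (0 + (k+1))), E2 x y (0 + (k+1)) (σ (0 + (k+1)))] =
            E1 x y (k+1) (σ (k+1)) :: [E2 x y (k+1) (σ (k+1))] from by rw [Nat.zero_add]]
          rw [cc_append, ih, cc_pair]
          rw [show (L x y σ 0 (k + 1)).getLast? = some (E2 x y k (σ k)) from by
            rw [L_getLast x y σ k 0, Nat.zero_add]]
          show LazyDP.C (innerF c x y) (juncF c x y) σ (k+1) + juncF c x y k (σ k) (σ (k+1)) +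
            innerF c x y (k+1) (σ (k+1)) = _
          rfl

end LazyDiag

namespace LazyDiag

/-- edges of a walk as a map over `range` -/
lemma edges_eq_map {V : Type*} {G : SimpleGraph V} :
    ∀ {u v : V} (w : G.Walk u v),
      w.edges = (List.range w.length).map (fun k => s(w.getVert k, w.getVert (k + 1))) := by
  intro u v w
  induction w with
  | nil => rfl
  | @cons u v' w' h q ih =>
      rw [SimpleGraph.Walk.edges_cons, SimpleGraph.Walk.length_cons,
        List.range_succ_eq_map, List.map_cons, List.map_map]
      congr 1
      rw [show (SimpleGraph.Walk.cons h q).getVert (0 + 1) = q.getVert 0 from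
          SimpleGraph.Walk.getVert_cons_succ q h, SimpleGraph.Walk.getVert_zero,
          SimpleGraph.Walk.getVert_zero]

variable {a b : ℕ}

lemma L_eq_map (x : ZMod (2 * a)) (y : ZMod (2 * b)) (σ : ℕ → Bool) :
    ∀ i, L x y σ 0 i = (List.range (2 * i)).map
      (fun k => if k % 2 = 0 then E1 x y (k / 2) (σ (k / 2)) else E2 x y (k / 2) (σ (k / 2))) := by
  intro i
  induction i with
  | zero => rfl
  | succ i ih =>
      have h1 : (2 * i) % 2 = 0 := by omega
      have h2 : 2 * i / 2 = i := by omega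
      have h3 : (2 * i + 1) % 2 = 1 := by omega
      have h4 : (2 * i + 1) / 2 = i := by omega
      rw [L_snoc x y σ i 0, Nat.zero_add, ih,
        show 2 * (i + 1) = (2 * i + 1) + 1 from by ring, List.range_succ, List.range_succ,
        List.map_append, List.map_append]
      simp only [List.map_cons, List.map_nil, h1, h2, h3, h4, List.append_assoc]
      norm_num

/-- every ascending diagonal's edge list comes from a choice sequence -/
lemma struct (ha : 2 ≤ a) (hb : 2 ≤ b) (x : ZMod (2 * a)) (y : ZMod (2 * b)) (i : ℕ)
    (w' : (torusG a b).Walk (x, y) (x + (i : ZMod (2 * a)), y + (i : ZMod (2 * b))))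
    (h : IsAscDiag a b i x y w') :
    ∃ σ : ℕ → Bool, w'.edges = L x y σ 0 i := by
  classical
  refine ⟨fun q => decide (w'.getVert (2 * q + 1) = mid x y q true), ?_⟩
  have hlen : w'.length = 2 * i := h.1
  rw [edges_eq_map w', h.1, L_eq_map]
  refine List.map_congr_left ?_
  intro k hk
  rw [List.mem_range] at hk
  obtain ⟨q, hq | hq⟩ : ∃ q, k = 2 * q ∨ k = 2 * q + 1 := ⟨k / 2, by omega⟩
  · -- even position
    have hq2 : q + 1 ≤ i := by omega
    have hv0 : w'.getVert (2 * q) = pt x y q := h.2 q (by omega)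
    have hv2 : w'.getVert (2 * q + 1 + 1) = pt x y (q + 1) := by
      rw [show 2 * q + 1 + 1 = 2 * (q + 1) from by ring]; exact h.2 (q + 1) hq2
    have hadj1 : (torusG a b).Adj (pt x y q) (w'.getVert (2 * q + 1)) := by
      rw [← hv0]; exact w'.adj_getVert_succ (by omega)
    have hadj2 : (torusG a b).Adj (w'.getVert (2 * q + 1)) (pt x y (q + 1)) := by
      rw [← hv2]; exact w'.adj_getVert_succ (by omega)
    have hmid : w'.getVert (2 * q + 1) = mid x y q
        (decide (w'.getVert (2 * q + 1) = mid x y q true)) := by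
      by_cases hdec : w'.getVert (2 * q + 1) = mid x y q true
      · rw [decide_eq_true hdec]; exact hdec
      · rw [decide_eq_false hdec]
        rcases mid_classify ha hb x y q hadj1 hadj2 with hz | hz
        · exact absurd hz hdec
        · exact hz
      
    subst hq
    have e1 : (2 * q) % 2 = 0 := by omega
    have e2 : 2 * q / 2 = q := by omega
    rw [if_pos e1, e2, E1, ← hv0, ← hmid]
  · -- odd position
    have hq2 : q + 1 ≤ i := by omega
    have hv0 : w'.getVert (2 * q) = pt x y q := h.2 q (by omega)
    have hv2 : w'.getVert (2 * q + 1 + 1) = pt x y (q + 1) := by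
      rw [show 2 * q + 1 + 1 = 2 * (q + 1) from by ring]; exact h.2 (q + 1) hq2
    have hadj1 : (torusG a b).Adj (pt x y q) (w'.getVert (2 * q + 1)) := by
      rw [← hv0]; exact w'.adj_getVert_succ (by omega)
    have hadj2 : (torusG a b).Adj (w'.getVert (2 * q + 1)) (pt x y (q + 1)) := by
      rw [← hv2]; exact w'.adj_getVert_succ (by omega)
    have hmid : w'.getVert (2 * q + 1) = mid x y q
        (decide (w'.getVert (2 * q + 1) = mid x y q true)) := by
      by_cases hdec : w'.getVert (2 * q + 1) = mid x y q true
      · rw [decide_eq_true hdec]; exact hdec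
      · rw [decide_eq_false hdec]
        rcases mid_classify ha hb x y q hadj1 hadj2 with hz | hz
        · exact absurd hz hdec
        · exact hz
    subst hq
    have e1 : ¬ ((2 * q + 1) % 2 = 0) := by omega
    have e2 : (2 * q + 1) / 2 = q := by omega
    rw [if_neg e1, e2, E2, ← hv2, ← hmid]

end LazyDiag

namespace LazyDiag

variable {a b : ℕ}

/-- the canonical diagonal walk for a choice sequence -/
def walkFrom (ha : 2 ≤ a) (hb : 2 ≤ b) (x : ZMod (2 * a)) (y : ZMod (2 * b)) (σ : ℕ → Bool) :
    (s i : ℕ) → (torusG a b).Walk (pt x y s) (pt x y (s + i))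
  | s, 0 => SimpleGraph.Walk.nil.copy rfl (by rw [Nat.add_zero])
  | s, (i + 1) =>
      SimpleGraph.Walk.cons (adj1 ha hb x y s (σ s))
        (SimpleGraph.Walk.cons (adj2 ha hb x y s (σ s))
          ((walkFrom ha hb x y σ (s + 1) i).copy rfl
            (by rw [show s + 1 + i = s + (i + 1) from by omega])))

variable (ha : 2 ≤ a) (hb : 2 ≤ b) (x : ZMod (2 * a)) (y : ZMod (2 * b)) (σ : ℕ → Bool)

lemma walkFrom_length : ∀ i s, (walkFrom ha hb x y σ s i).length = 2 * i := by
  intro i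
  induction i with
  | zero => intro s; simp [walkFrom]
  | succ i ih =>
      intro s
      show ((SimpleGraph.Walk.cons _ (SimpleGraph.Walk.cons _
        ((walkFrom ha hb x y σ (s + 1) i).copy rfl _)))).length = 2 * (i + 1)
      rw [SimpleGraph.Walk.length_cons, SimpleGraph.Walk.length_cons,
        SimpleGraph.Walk.length_copy, ih]
      ring

lemma walkFrom_edges : ∀ i s, (walkFrom ha hb x y σ s i).edges = L x y σ s i := by
  intro i
  induction i with
  | zero => intro s; show (SimpleGraph.Walk.nil.copy rfl _).edges = _; rw [SimpleGraph.Walk.edges_copy, SimpleGraph.Walk.edges_nil]; rfl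
  | succ i ih =>
      intro s
      show ((SimpleGraph.Walk.cons _ (SimpleGraph.Walk.cons _
        ((walkFrom ha hb x y σ (s + 1) i).copy rfl _)))).edges = L x y σ s (i + 1)
      rw [SimpleGraph.Walk.edges_cons, SimpleGraph.Walk.edges_cons,
        SimpleGraph.Walk.edges_copy, ih]
      rfl

lemma walkFrom_getVert : ∀ i s k, k ≤ i →
    (walkFrom ha hb x y σ s i).getVert (2 * k) = pt x y (s + k) := by
  intro i
  induction i with
  | zero =>
      intro s k hk
      have : k = 0 := by omega
      subst this
      show (SimpleGraph.Walk.nil.copy rfl _).getVert 0 = pt x y (s + 0)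
      rw [SimpleGraph.Walk.getVert_copy, SimpleGraph.Walk.getVert_zero, Nat.add_zero]
  | succ i ih =>
      intro s k hk
      cases k with
      | zero =>
          rw [Nat.mul_zero, SimpleGraph.Walk.getVert_zero, Nat.add_zero]
      | succ k =>
          show ((SimpleGraph.Walk.cons _ (SimpleGraph.Walk.cons _
            ((walkFrom ha hb x y σ (s + 1) i).copy rfl _)))).getVert (2 * (k + 1)) =
            pt x y (s + (k + 1))
          rw [show 2 * (k + 1) = (2 * k) + 1 + 1 from by ring,
            SimpleGraph.Walk.getVert_cons_succ, SimpleGraph.Walk.getVert_cons_succ,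
            SimpleGraph.Walk.getVert_copy, ih s.succ k (by omega),
            show s + 1 + k = s + (k + 1) from by omega]

end LazyDiag


open LazyDiag

/-- (Existence of lazy diagonals.)  For `2 ≤ a ≤ b`, any 2-coloring
of `C_{2a} □ C_{2b}`, any start `(x, y)` and any `1 ≤ j ≤ a`, there is a `j`-ascending
diagonal starting at `(x, y)` each of whose initial `i`-ascending diagonal segments
(consisting of its first `2i` edges) has the minimum number of color changes among all
`i`-ascending diagonals starting at `(x, y)`. -/
theorem exists_lazy_ascending_diagonal
    {a b : ℕ} (ha : 2 ≤ a) (hab : a ≤ b)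
    (c : Sym2 (ZMod (2 * a) × ZMod (2 * b)) → Bool)
    (x : ZMod (2 * a)) (y : ZMod (2 * b)) (j : ℕ) (hj1 : 1 ≤ j) (hja : j ≤ a) :
    ∃ w : (torusG a b).Walk (x, y) (x + (j : ZMod (2 * a)), y + (j : ZMod (2 * b))),
      IsAscDiag a b j x y w ∧
      ∀ i : ℕ, i ≤ j →
        ∀ w' : (torusG a b).Walk (x, y) (x + (i : ZMod (2 * a)), y + (i : ZMod (2 * b))),
          IsAscDiag a b i x y w' →
          colorChanges c (w.edges.take (2 * i)) ≤ colorChanges c w'.edges := by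
  have hb : 2 ≤ b := le_trans ha hab
  obtain ⟨k, rfl⟩ : ∃ k, j = k + 1 := ⟨j - 1, by omega⟩
  set inn := innerF c x y with hinn
  set jun := juncF c x y with hjun
  -- pick an optimal final state
  have hex : ∃ t : Bool, LazyDP.f inn jun (k + 1) t = LazyDP.m inn jun (k + 1) := by
    rcases min_choice (LazyDP.f inn jun (k + 1) true) (LazyDP.f inn jun (k + 1) false) with h | h
    · exact ⟨true, h.symm⟩
    · exact ⟨false, h.symm⟩
  obtain ⟨t, ht⟩ := hex
  obtain ⟨σ, -, hσ⟩ := LazyDP.lazy inn jun (fun k s t => juncF_le_one c x y k s t) k t ht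
  -- the lazy walk
  have h0 : pt x y 0 = (x, y) := by
    simp [pt]
  have hj : pt x y (0 + (k + 1)) =
      (x + ((k + 1 : ℕ) : ZMod (2 * a)), y + ((k + 1 : ℕ) : ZMod (2 * b))) := by
    rw [Nat.zero_add]; rfl
  refine ⟨(walkFrom ha hb x y σ 0 (k + 1)).copy h0 hj, ⟨?_, ?_⟩, ?_⟩
  · rw [SimpleGraph.Walk.length_copy, walkFrom_length]
  · intro i hi
    rw [SimpleGraph.Walk.getVert_copy, walkFrom_getVert ha hb x y σ (k + 1) 0 i hi,
      Nat.zero_add]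
    rfl
  · intro i hi w' hw'
    rw [SimpleGraph.Walk.edges_copy, walkFrom_edges, L_take x y σ hi]
    obtain ⟨σ'', hσ''⟩ := struct ha hb x y i w' hw'
    rw [hσ'', cc_L c x y σ'' i, cc_L c x y σ i]
    cases i with
    | zero => exact Nat.le_refl 0
    | succ i =>
        rw [hσ (i + 1) (by omega) (by omega)]
        exact LazyDP.m_le_C inn jun σ'' i
end
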